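/- arXiv:1905.04927 — 3 statements merged into one kernel-verified Lean document; each statement's English description precedes it below -/
import Mathlib

section
/- If φ = (φ₁, φ₂) is a pair of continuously differentiable complex-valued functions on a neighborhood of the origin in ℂ², satisfying x₁·φ₁(x) + x₂·φ₂(x) = 0 for all x = (x₁,x₂), then there exists a continuous function ψ on a (possibly smaller) neighborhood of the origin such that φ₁ = -x₂·ψ and φ₂ = x₁·ψ. -/
open Filter Topology

set_option maxHeartbeats 1000000 in
/-- If `φ = (φ₁, φ₂)` is a pair of `C¹` functions on a neighborhood `U` of
`0 ∈ ℂ²` satisfying `x₁·φ₁ + x₂·φ₂ = 0` on `U`, then there is a continuous `ψ` on a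
possibly smaller neighborhood `V` of `0` with `φ₁ = -x₂·ψ` and `φ₂ = x₁·ψ` on `V`. -/
theorem koszul_division_C1_to_C0
    (U : Set (ℂ × ℂ)) (hU : IsOpen U) (h0 : (0 : ℂ × ℂ) ∈ U)
    (φ₁ φ₂ : ℂ × ℂ → ℂ)
    (hφ₁ : ContDiffOn ℝ 1 φ₁ U) (hφ₂ : ContDiffOn ℝ 1 φ₂ U)
    (hrel : ∀ x ∈ U, x.1 * φ₁ x + x.2 * φ₂ x = 0) :
    ∃ (V : Set (ℂ × ℂ)) (ψ : ℂ × ℂ → ℂ),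
      IsOpen V ∧ (0 : ℂ × ℂ) ∈ V ∧ V ⊆ U ∧ ContinuousOn ψ V ∧
      ∀ x ∈ V, φ₁ x = -x.2 * ψ x ∧ φ₂ x = x.1 * ψ x := by
  classical
  obtain ⟨r, hr, hball⟩ := Metric.isOpen_iff.mp hU 0 h0
  have hd₁ : DifferentiableAt ℝ φ₁ 0 :=
    (hφ₁.differentiableOn one_ne_zero).differentiableAt (hU.mem_nhds h0)
  have hd₂ : DifferentiableAt ℝ φ₂ 0 :=
    (hφ₂.differentiableOn one_ne_zero).differentiableAt (hU.mem_nhds h0)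
  set L₁ := fderiv ℝ φ₁ 0 with hL₁def
  set L₂ := fderiv ℝ φ₂ 0 with hL₂def
  have hL₁ : HasFDerivAt φ₁ L₁ 0 := hd₁.hasFDerivAt
  have hL₂ : HasFDerivAt φ₂ L₂ 0 := hd₂.hasFDerivAt
  -- values on the axes vanish
  have hline1 : ∀ t : ℂ, t ≠ 0 → ((t, 0) : ℂ × ℂ) ∈ U → φ₁ (t, 0) = 0 := by
    intro t ht htU
    have h := hrel (t, 0) htU
    simp only [zero_mul, add_zero] at h
    exact (mul_eq_zero.mp h).resolve_left ht
  have hline2 : ∀ t : ℂ, t ≠ 0 → ((0, t) : ℂ × ℂ) ∈ U → φ₂ (0, t) = 0 := by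
    intro t ht htU
    have h := hrel (0, t) htU
    simp only [zero_mul, zero_add] at h
    exact (mul_eq_zero.mp h).resolve_left ht
  have hmem1 : ∀ᶠ t : ℂ in 𝓝 0, ((t, 0) : ℂ × ℂ) ∈ U := by
    have hc : ContinuousAt (fun t : ℂ => ((t, 0) : ℂ × ℂ)) 0 := by fun_prop
    exact hc.preimage_mem_nhds (by simpa [Prod.mk_zero_zero] using hU.mem_nhds h0)
  have hmem2 : ∀ᶠ t : ℂ in 𝓝 0, ((0, t) : ℂ × ℂ) ∈ U := by
    have hc : ContinuousAt (fun t : ℂ => ((0, t) : ℂ × ℂ)) 0 := by fun_prop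
    exact hc.preimage_mem_nhds (by simpa [Prod.mk_zero_zero] using hU.mem_nhds h0)
  have hφ10 : φ₁ 0 = 0 := by
    have hc : ContinuousAt (fun t : ℂ => φ₁ (t, 0)) 0 :=
      ContinuousAt.comp (by simpa [Prod.mk_zero_zero] using hd₁.continuousAt) (by fun_prop)
    have hcont : Tendsto (fun t : ℂ => φ₁ (t, 0)) (𝓝[≠] 0) (𝓝 (φ₁ (0, 0))) :=
      hc.tendsto.mono_left nhdsWithin_le_nhds
    have h0' : Tendsto (fun t : ℂ => φ₁ (t, 0)) (𝓝[≠] 0) (𝓝 0) := by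
      apply tendsto_const_nhds.congr'
      filter_upwards [self_mem_nhdsWithin, hmem1.filter_mono nhdsWithin_le_nhds] with t ht htU
      exact (hline1 t ht htU).symm
    have := tendsto_nhds_unique hcont h0'
    simpa [Prod.mk_zero_zero] using this
  have hφ20 : φ₂ 0 = 0 := by
    have hc : ContinuousAt (fun t : ℂ => φ₂ (0, t)) 0 :=
      ContinuousAt.comp (by simpa [Prod.mk_zero_zero] using hd₂.continuousAt) (by fun_prop)
    have hcont : Tendsto (fun t : ℂ => φ₂ (0, t)) (𝓝[≠] 0) (𝓝 (φ₂ (0, 0))) :=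
      hc.tendsto.mono_left nhdsWithin_le_nhds
    have h0' : Tendsto (fun t : ℂ => φ₂ (0, t)) (𝓝[≠] 0) (𝓝 0) := by
      apply tendsto_const_nhds.congr'
      filter_upwards [self_mem_nhdsWithin, hmem2.filter_mono nhdsWithin_le_nhds] with t ht htU
      exact (hline2 t ht htU).symm
    have := tendsto_nhds_unique hcont h0'
    simpa [Prod.mk_zero_zero] using this
  -- real directional derivatives
  have hderiv : ∀ (φ : ℂ × ℂ → ℂ) (L : (ℂ × ℂ) →L[ℝ] ℂ), HasFDerivAt φ L 0 →
      ∀ v : ℂ × ℂ, HasDerivAt (fun t : ℝ => φ (t • v)) (L v) 0 := by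
    intro φ L hL v
    have hg : HasDerivAt (fun t : ℝ => t • v) v 0 := by
      simpa using (hasDerivAt_id (0:ℝ)).smul_const v
    have h' : HasFDerivAt φ L ((0:ℝ) • v) := by simpa using hL
    exact h'.comp_hasDerivAt 0 hg
  have hmemv : ∀ v : ℂ × ℂ, ∀ᶠ t : ℝ in 𝓝 0, t • v ∈ U := by
    intro v
    have hc : ContinuousAt (fun t : ℝ => t • v) 0 := by fun_prop
    exact hc.preimage_mem_nhds (by simpa using hU.mem_nhds h0)
  -- derivatives vanish on the respective axes
  have hB1 : ∀ v : ℂ, L₁ (v, 0) = 0 := by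
    intro v
    rcases eq_or_ne v 0 with hv | hv
    · subst hv; simpa [Prod.mk_zero_zero] using L₁.map_zero
    have hD : HasDerivAt (fun t : ℝ => φ₁ (t • ((v, 0) : ℂ × ℂ))) (L₁ (v, 0)) 0 :=
      hderiv φ₁ L₁ hL₁ (v, 0)
    have hev : (fun t : ℝ => φ₁ (t • ((v, 0) : ℂ × ℂ))) =ᶠ[𝓝 (0:ℝ)] fun _ => 0 := by
      filter_upwards [hmemv (v, 0)] with t htU
      have hsm : t • ((v, 0) : ℂ × ℂ) = (((t:ℂ) * v, 0) : ℂ × ℂ) := by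
        simp [Prod.smul_mk, Complex.real_smul]
      rcases eq_or_ne t 0 with h | h
      · subst h; simpa using hφ10
      · rw [hsm] at htU ⊢
        exact hline1 _ (mul_ne_zero (by exact_mod_cast h) hv) htU
    have hD0 : HasDerivAt (fun t : ℝ => φ₁ (t • ((v, 0) : ℂ × ℂ))) 0 0 :=
      (hasDerivAt_const (0:ℝ) (0:ℂ)).congr_of_eventuallyEq hev
    exact hD.unique hD0
  have hB2 : ∀ v : ℂ, L₂ (0, v) = 0 := by
    intro v
    rcases eq_or_ne v 0 with hv | hv
    · subst hv; simpa [Prod.mk_zero_zero] using L₂.map_zero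
    have hD : HasDerivAt (fun t : ℝ => φ₂ (t • ((0, v) : ℂ × ℂ))) (L₂ (0, v)) 0 :=
      hderiv φ₂ L₂ hL₂ (0, v)
    have hev : (fun t : ℝ => φ₂ (t • ((0, v) : ℂ × ℂ))) =ᶠ[𝓝 (0:ℝ)] fun _ => 0 := by
      filter_upwards [hmemv (0, v)] with t htU
      have hsm : t • ((0, v) : ℂ × ℂ) = ((0, (t:ℂ) * v) : ℂ × ℂ) := by
        simp [Prod.smul_mk, Complex.real_smul]
      rcases eq_or_ne t 0 with h | h
      · subst h; simpa using hφ20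
      · rw [hsm] at htU ⊢
        exact hline2 _ (mul_ne_zero (by exact_mod_cast h) hv) htU
    have hD0 : HasDerivAt (fun t : ℝ => φ₂ (t • ((0, v) : ℂ × ℂ))) 0 0 :=
      (hasDerivAt_const (0:ℝ) (0:ℂ)).congr_of_eventuallyEq hev
    exact hD.unique hD0
  -- the quadratic identity
  have hC : ∀ u w : ℂ, u * L₁ (u, w) + w * L₂ (u, w) = 0 := by
    intro u w
    set v : ℂ × ℂ := (u, w) with hv
    have hslope : ∀ (φ : ℂ × ℂ → ℂ) (L : (ℂ × ℂ) →L[ℝ] ℂ), HasFDerivAt φ L 0 → φ 0 = 0 →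
        Tendsto (fun t : ℝ => t⁻¹ • φ (t • v)) (𝓝[≠] (0:ℝ)) (𝓝 (L v)) := by
      intro φ L hL h00
      have h := hasDerivAt_iff_tendsto_slope.mp (hderiv φ L hL v)
      have heq : slope (fun t : ℝ => φ (t • v)) 0 = fun t : ℝ => t⁻¹ • φ (t • v) := by
        funext t; rw [slope_def_module]; simp [h00]
      rwa [heq] at h
    have hT : Tendsto (fun t : ℝ => u * (t⁻¹ • φ₁ (t • v)) + w * (t⁻¹ • φ₂ (t • v)))
        (𝓝[≠] (0:ℝ)) (𝓝 (u * L₁ v + w * L₂ v)) :=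
      ((tendsto_const_nhds.mul (hslope φ₁ L₁ hL₁ hφ10)).add
        (tendsto_const_nhds.mul (hslope φ₂ L₂ hL₂ hφ20)))
    have hT0 : Tendsto (fun t : ℝ => u * (t⁻¹ • φ₁ (t • v)) + w * (t⁻¹ • φ₂ (t • v)))
        (𝓝[≠] (0:ℝ)) (𝓝 0) := by
      apply tendsto_const_nhds.congr'
      filter_upwards [self_mem_nhdsWithin, (hmemv v).filter_mono nhdsWithin_le_nhds] with t ht htU
      have h := hrel (t • v) htU
      have h1 : (t • v).1 = (t:ℂ) * u := by simp [hv, Complex.real_smul]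
      have h2 : (t • v).2 = (t:ℂ) * w := by simp [hv, Complex.real_smul]
      rw [h1, h2] at h
      have htc : (t:ℂ) ≠ 0 := by exact_mod_cast ht
      have h' : u * φ₁ (t • v) + w * φ₂ (t • v) = 0 := by
        have hmul : (t:ℂ) * (u * φ₁ (t • v) + w * φ₂ (t • v)) = 0 := by linear_combination h
        exact (mul_eq_zero.mp hmul).resolve_left htc
      have hre : u * (t⁻¹ • φ₁ (t • v)) + w * (t⁻¹ • φ₂ (t • v))
          = (t:ℂ)⁻¹ * (u * φ₁ (t • v) + w * φ₂ (t • v)) := by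
        simp only [Complex.real_smul, Complex.ofReal_inv]; ring
      rw [hre, h', mul_zero]
    exact tendsto_nhds_unique hT hT0
  -- explicit form of the derivatives
  set a : ℂ := L₂ (1, 0) with hadef
  have hA1 : ∀ w : ℂ, L₁ (0, w) = -(w * a) := by
    intro w
    have h := hC 1 w
    have e1 : L₁ (1, w) = L₁ (0, w) := by
      have hdec : ((1, w) : ℂ × ℂ) = (1, 0) + (0, w) := by simp
      rw [hdec, map_add, hB1 1, zero_add]
    have e2 : L₂ (1, w) = a := by
      have hdec : ((1, w) : ℂ × ℂ) = (1, 0) + (0, w) := by simp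
      rw [hdec, map_add, hB2 w, add_zero]
    rw [e1, e2] at h
    linear_combination h
  have hL1form : ∀ p : ℂ × ℂ, L₁ p = -a * p.2 := by
    intro p
    have hdec : ((p.1, 0) : ℂ × ℂ) + (0, p.2) = p := by simp
    conv_lhs => rw [← hdec]
    rw [map_add, hB1, hA1, zero_add]; ring
  have hL2form : ∀ p : ℂ × ℂ, L₂ p = a * p.1 := by
    have hA2 : ∀ u : ℂ, L₂ (u, 0) = a * u := by
      intro u
      have h := hC u 1
      have e1 : L₁ (u, 1) = -a := by
        have := hA1 1
        have hdec : ((u, 1) : ℂ × ℂ) = (u, 0) + (0, 1) := by simp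
        rw [hdec, map_add, hB1 u, zero_add, this]; ring
      have e2 : L₂ (u, 1) = L₂ (u, 0) := by
        have hdec : ((u, 1) : ℂ × ℂ) = (u, 0) + (0, 1) := by simp
        rw [hdec, map_add, hB2 1, add_zero]
      rw [e1, e2] at h
      linear_combination h
    intro p
    have hdec : ((p.1, 0) : ℂ × ℂ) + (0, p.2) = p := by simp
    conv_lhs => rw [← hdec]
    rw [map_add, hB2, hA2, add_zero]
  -- little-o estimates
  have hlo₁ : (fun x : ℂ × ℂ => φ₁ x + a * x.2) =o[𝓝 (0 : ℂ × ℂ)] fun x => x := by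
    have h := hL₁.isLittleO
    have heq : (fun x : ℂ × ℂ => φ₁ x - φ₁ 0 - L₁ (x - 0)) = fun x => φ₁ x + a * x.2 := by
      funext x
      rw [hφ10, sub_zero, hL1form]
      ring
    have heq2 : (fun x : ℂ × ℂ => x - 0) = fun x : ℂ × ℂ => x := by funext x; simp
    rwa [heq, heq2] at h
  have hlo₂ : (fun x : ℂ × ℂ => φ₂ x - a * x.1) =o[𝓝 (0 : ℂ × ℂ)] fun x => x := by
    have h := hL₂.isLittleO
    have heq : (fun x : ℂ × ℂ => φ₂ x - φ₂ 0 - L₂ (x - 0)) = fun x => φ₂ x - a * x.1 := by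
      funext x
      rw [hφ20, sub_zero, hL2form]
      ring
    have heq2 : (fun x : ℂ × ℂ => x - 0) = fun x : ℂ × ℂ => x := by funext x; simp
    rwa [heq, heq2] at h
  -- the candidate ψ
  set ψ : ℂ × ℂ → ℂ := fun x =>
    if x.1 ≠ 0 then φ₂ x / x.1 else if x.2 ≠ 0 then -φ₁ x / x.2 else a with hψdef
  have hψ_eq1 : ∀ x : ℂ × ℂ, x.1 ≠ 0 → ψ x = φ₂ x / x.1 := by
    intro x h; simp only [hψdef]; rw [if_pos h]
  have hψ_eq2 : ∀ x ∈ U, x.2 ≠ 0 → ψ x = -φ₁ x / x.2 := by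
    intro x hxU h2
    rcases ne_or_eq x.1 0 with h1 | h1
    · rw [hψ_eq1 x h1, div_eq_div_iff h1 h2]
      linear_combination hrel x hxU
    · simp only [hψdef]
      rw [if_neg (by simpa using h1), if_pos h2]
  have hψ0 : ψ 0 = a := by
    simp only [hψdef]
    norm_num
  refine ⟨Metric.ball 0 r, ψ, Metric.isOpen_ball, Metric.mem_ball_self hr, hball, ?_, ?_⟩
  · -- continuity
    intro x hx
    apply ContinuousAt.continuousWithinAt
    rcases ne_or_eq x.1 0 with hx1 | hx1
    · have hcont : ContinuousAt (fun y : ℂ × ℂ => φ₂ y / y.1) x := by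
        have hφ : ContinuousAt φ₂ x :=
          hφ₂.continuousOn.continuousAt (hU.mem_nhds (hball hx))
        exact hφ.div continuousAt_fst hx1
      apply hcont.congr
      have hopen : IsOpen {y : ℂ × ℂ | y.1 ≠ 0} := isOpen_ne_fun continuous_fst continuous_const
      filter_upwards [hopen.mem_nhds hx1] with y hy
      exact (hψ_eq1 y hy).symm
    · rcases ne_or_eq x.2 0 with hx2 | hx2
      · have hcont : ContinuousAt (fun y : ℂ × ℂ => -φ₁ y / y.2) x := by
          have hφ : ContinuousAt φ₁ x :=
            hφ₁.continuousOn.continuousAt (hU.mem_nhds (hball hx))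
          exact hφ.neg.div continuousAt_snd hx2
        apply hcont.congr
        have hopen : IsOpen {y : ℂ × ℂ | y.2 ≠ 0} := isOpen_ne_fun continuous_snd continuous_const
        filter_upwards [hopen.mem_nhds hx2, hU.mem_nhds (hball hx)] with y hy hyU
        exact (hψ_eq2 y hyU hy).symm
      · -- continuity at the origin
        have hx0 : x = 0 := Prod.ext hx1 hx2
        subst hx0
        rw [ContinuousAt, hψ0, Metric.tendsto_nhds]
        intro ε hε
        have hε2 : (0:ℝ) < ε / 2 := by linarith
        filter_upwards [hlo₁.def hε2, hlo₂.def hε2, hU.mem_nhds h0] with x hx1e hx2e hxU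
        rw [dist_eq_norm]
        rcases le_or_gt ‖x.2‖ ‖x.1‖ with hle | hlt
        · rcases eq_or_ne x.1 0 with h10 | h10
          · have h20 : x.2 = 0 := norm_le_zero_iff.mp (by simpa [h10] using hle)
            have hx0 : x = 0 := Prod.ext h10 h20
            rw [hx0, hψ0, sub_self, norm_zero]
            exact hε
          · have hxnorm : ‖x‖ = ‖x.1‖ := by
              rw [Prod.norm_def]; exact max_eq_left hle
            have hkey : ψ x - a = (φ₂ x - a * x.1) / x.1 := by
              rw [hψ_eq1 x h10]
              field_simp
            rw [hkey, norm_div]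
            have hpos : (0:ℝ) < ‖x.1‖ := norm_pos_iff.mpr h10
            rw [div_lt_iff₀ hpos]
            calc ‖φ₂ x - a * x.1‖ ≤ ε / 2 * ‖x‖ := hx2e
              _ = ε / 2 * ‖x.1‖ := by rw [hxnorm]
              _ < ε * ‖x.1‖ := by nlinarith
        · have h20 : x.2 ≠ 0 := by
            intro h
            rw [h] at hlt
            simp only [norm_zero] at hlt
            exact (norm_nonneg x.1).not_gt hlt
          have hxnorm : ‖x‖ = ‖x.2‖ := by
            rw [Prod.norm_def]; exact max_eq_right hlt.le
          have hkey : ψ x - a = -(φ₁ x + a * x.2) / x.2 := by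
            rw [hψ_eq2 x hxU h20]
            field_simp
            ring
          rw [hkey, norm_div, norm_neg]
          have hpos : (0:ℝ) < ‖x.2‖ := norm_pos_iff.mpr h20
          rw [div_lt_iff₀ hpos]
          calc ‖φ₁ x + a * x.2‖ ≤ ε / 2 * ‖x‖ := hx1e
            _ = ε / 2 * ‖x.2‖ := by rw [hxnorm]
            _ < ε * ‖x.2‖ := by nlinarith
  · -- the division identities
    intro x hx
    have hxU : x ∈ U := hball hx
    have h := hrel x hxU
    rcases ne_or_eq x.1 0 with h10 | h10
    · rw [hψ_eq1 x h10]
      constructor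
      · field_simp
        linear_combination h
      · field_simp
    · rcases ne_or_eq x.2 0 with h20 | h20
      · rw [hψ_eq2 x hxU h20]
        have hφ2x : φ₂ x = 0 := by
          rw [h10, zero_mul, zero_add] at h
          exact (mul_eq_zero.mp h).resolve_left h20
        constructor
        · field_simp
        · rw [h10, hφ2x, zero_mul]
      · have hx0 : x = 0 := Prod.ext h10 h20
        subst hx0
        constructor
        · rw [hφ10]; simp
        · rw [hφ20]; simp
end

section
/- Define φ : ℂ² \ {0} → ℂ² by φ(x) = (-x₂, x₁)/|x|^{1/3}, extended by φ(0) = 0. Then φ is continuous on ℂ², satisfies x₁·φ₁(x) + x₂·φ₂(x) = 0 for all x, but there is no continuous function ψ on any neighborhood of 0 in ℂ² such that φ₁(x) = -x₂·ψ(x) and φ₂(x) = x₁·ψ(x) for all x in that neighborhood. -/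
open Complex Filter Topology

noncomputable def nn (x : ℂ × ℂ) : ℝ :=
  Real.sqrt (‖x.1‖ ^ 2 + ‖x.2‖ ^ 2)

lemma nn_cont : Continuous nn := by
  unfold nn
  exact Real.continuous_sqrt.comp
    (((continuous_norm.comp continuous_fst).pow 2).add
      ((continuous_norm.comp continuous_snd).pow 2))

lemma nn_nonneg (x : ℂ × ℂ) : 0 ≤ nn x := Real.sqrt_nonneg _

lemma nn_pos {x : ℂ × ℂ} (hx : x ≠ 0) : 0 < nn x := by
  apply Real.sqrt_pos.mpr
  rcases eq_or_ne x.1 0 with h1 | h1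
  · have h2 : x.2 ≠ 0 := by
      intro h2
      exact hx (Prod.ext h1 h2)
    have := pow_pos (norm_pos_iff.mpr h2) 2
    have := sq_nonneg ‖x.1‖
    linarith
  · have := pow_pos (norm_pos_iff.mpr h1) 2
    have := sq_nonneg ‖x.2‖
    linarith

lemma abs_fst_le (x : ℂ × ℂ) : ‖x.1‖ ≤ nn x := by
  rw [show ‖x.1‖ = Real.sqrt (‖x.1‖ ^ 2) from
    (Real.sqrt_sq (norm_nonneg _)).symm]
  exact Real.sqrt_le_sqrt (by nlinarith [sq_nonneg ‖x.2‖])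

lemma abs_snd_le (x : ℂ × ℂ) : ‖x.2‖ ≤ nn x := by
  rw [show ‖x.2‖ = Real.sqrt (‖x.2‖ ^ 2) from
    (Real.sqrt_sq (norm_nonneg _)).symm]
  exact Real.sqrt_le_sqrt (by nlinarith [sq_nonneg ‖x.1‖])

/-- The map `φ(x) = (-x₂, x₁)/|x|^{1/3}` (with `φ(0) = 0`, `|x|` the Euclidean
norm) is continuous on `ℂ²` and satisfies `x₁·φ₁ + x₂·φ₂ = 0`, but there is no continuous
`ψ` on any neighborhood of `0` with `φ₁ = -x₂·ψ` and `φ₂ = x₁·ψ` there. -/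
theorem continuous_relation_without_continuous_division
    (φ : ℂ × ℂ → ℂ × ℂ)
    (hφdef : ∀ x : ℂ × ℂ, x ≠ 0 →
      φ x = (-x.2 / ((Real.sqrt (‖x.1‖ ^ 2 + ‖x.2‖ ^ 2) ^ ((1 : ℝ)/3) : ℝ) : ℂ),
             x.1 / ((Real.sqrt (‖x.1‖ ^ 2 + ‖x.2‖ ^ 2) ^ ((1 : ℝ)/3) : ℝ) : ℂ)))
    (hφ0 : φ 0 = 0) :
    Continuous φ ∧
    (∀ x : ℂ × ℂ, x.1 * (φ x).1 + x.2 * (φ x).2 = 0) ∧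
    ¬ ∃ (V : Set (ℂ × ℂ)) (ψ : ℂ × ℂ → ℂ),
        IsOpen V ∧ (0 : ℂ × ℂ) ∈ V ∧ ContinuousOn ψ V ∧
        ∀ x ∈ V, (φ x).1 = -x.2 * ψ x ∧ (φ x).2 = x.1 * ψ x := by
  have hdef' : ∀ x : ℂ × ℂ, x ≠ 0 →
      φ x = (-x.2 / ((nn x ^ ((1:ℝ)/3) : ℝ) : ℂ), x.1 / ((nn x ^ ((1:ℝ)/3) : ℝ) : ℂ)) := by
    intro x hx
    rw [hφdef x hx]; rfl
  refine ⟨?_, ?_, ?_⟩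
  · -- Continuity
    rw [continuous_iff_continuousAt]
    intro x₀
    rcases eq_or_ne x₀ 0 with rfl | hx₀
    · -- continuity at 0
      have hbound : ∀ x : ℂ × ℂ, ‖φ x‖ ≤ nn x ^ ((2:ℝ)/3) := by
        intro x
        rcases eq_or_ne x 0 with rfl | hx
        · simp [hφ0, Real.rpow_nonneg (nn_nonneg 0)]
        · have hn := nn_pos hx
          have hr : (0:ℝ) < nn x ^ ((1:ℝ)/3) := Real.rpow_pos_of_pos hn _
          rw [hdef' x hx]
          have key : nn x / nn x ^ ((1:ℝ)/3) = nn x ^ ((2:ℝ)/3) := by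
            rw [show nn x / nn x ^ ((1:ℝ)/3) = nn x ^ (1:ℝ) / nn x ^ ((1:ℝ)/3) by
              rw [Real.rpow_one], ← Real.rpow_sub hn]
            norm_num
          rw [Prod.norm_def]
          apply max_le
          · rw [norm_div, norm_neg, Complex.norm_real, Real.norm_of_nonneg hr.le, ← key]
            gcongr
            simpa using abs_snd_le x
          · rw [norm_div, Complex.norm_real, Real.norm_of_nonneg hr.le, ← key]
            gcongr
            simpa using abs_fst_le x
      have hg : Tendsto (fun x : ℂ × ℂ => nn x ^ ((2:ℝ)/3)) (𝓝 0) (𝓝 0) := by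
        have h1 : ContinuousAt (fun t : ℝ => t ^ ((2:ℝ)/3)) 0 :=
          Real.continuousAt_rpow_const 0 _ (Or.inr (by norm_num))
        have h2 : Tendsto nn (𝓝 (0 : ℂ × ℂ)) (𝓝 0) := by
          have := nn_cont.tendsto 0
          simpa [nn] using this
        have := (h1.tendsto).comp h2
        simpa [Function.comp_def, Real.zero_rpow (by norm_num : ((2:ℝ)/3) ≠ 0)] using this
      have : Tendsto φ (𝓝 0) (𝓝 0) := squeeze_zero_norm hbound hg
      simpa [ContinuousAt, hφ0] using this
    · -- continuity away from 0
      have hn := nn_pos hx₀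
      have hopen : IsOpen {x : ℂ × ℂ | x ≠ 0} := isOpen_compl_singleton
      have hden : ContinuousAt (fun x : ℂ × ℂ => ((nn x ^ ((1:ℝ)/3) : ℝ) : ℂ)) x₀ := by
        apply Complex.continuous_ofReal.continuousAt.comp
        exact (Real.continuousAt_rpow_const (nn x₀) _ (Or.inl hn.ne')).comp
          nn_cont.continuousAt
      have hden0 : ((nn x₀ ^ ((1:ℝ)/3) : ℝ) : ℂ) ≠ 0 := by
        simpa using (Real.rpow_pos_of_pos hn ((1:ℝ)/3)).ne'
      have hF : ContinuousAt (fun x : ℂ × ℂ =>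
          ((-x.2 / ((nn x ^ ((1:ℝ)/3) : ℝ) : ℂ), x.1 / ((nn x ^ ((1:ℝ)/3) : ℝ) : ℂ)) : ℂ × ℂ)) x₀ := by
        apply ContinuousAt.prodMk
        · exact (continuous_snd.continuousAt.neg).div hden hden0
        · exact continuous_fst.continuousAt.div hden hden0
      apply hF.congr
      filter_upwards [hopen.mem_nhds hx₀] with x hx
      exact (hdef' x hx).symm
  · -- the relation
    intro x
    rcases eq_or_ne x 0 with rfl | hx
    · simp [hφ0]
    · rw [hdef' x hx]
      ring
  · -- no continuous division
    rintro ⟨V, ψ, hV, h0, hψ, hfac⟩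
    set C : ℝ → ℂ × ℂ := fun t => (((t : ℂ), (0 : ℂ)) : ℂ × ℂ) with hC
    have hCcont : Tendsto C (𝓝[>] (0:ℝ)) (𝓝 (0 : ℂ × ℂ)) := by
      have h1 : Continuous C := by
        exact (Complex.continuous_ofReal.prodMk continuous_const)
      have := h1.tendsto 0
      simp only [hC] at this ⊢
      simpa [Prod.mk_zero_zero] using this.mono_left nhdsWithin_le_nhds
    have hmemV : ∀ᶠ t in 𝓝[>] (0:ℝ), C t ∈ V := hCcont (hV.mem_nhds h0)
    have hψ0 : Tendsto (fun t => ψ (C t)) (𝓝[>] (0:ℝ)) (𝓝 (ψ 0)) :=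
      ((hψ.continuousAt (hV.mem_nhds h0)).tendsto).comp hCcont
    have hval : ∀ᶠ t in 𝓝[>] (0:ℝ), ψ (C t) = (((t ^ ((1:ℝ)/3))⁻¹ : ℝ) : ℂ) := by
      filter_upwards [hmemV, self_mem_nhdsWithin] with t htV ht
      have htpos : (0:ℝ) < t := ht
      have hxne : C t ≠ 0 := by
        simp only [hC, Ne, Prod.mk_eq_zero, not_and]
        intro h
        exact absurd (Complex.ofReal_eq_zero.mp h) htpos.ne'
      have h2 := (hfac _ htV).2
      rw [hφdef _ hxne] at h2
      simp only [hC] at h2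
      rw [show Real.sqrt (‖((t:ℂ))‖ ^ 2 + ‖(0:ℂ)‖ ^ 2) = t by
        simp [Complex.norm_real, abs_of_pos htpos, _root_.sq_abs, Real.sqrt_sq htpos.le]] at h2
      have hr : (0:ℝ) < t ^ ((1:ℝ)/3) := Real.rpow_pos_of_pos htpos _
      have hrC : ((t ^ ((1:ℝ)/3) : ℝ) : ℂ) ≠ 0 := by simpa using hr.ne'
      have htC : ((t:ℝ) : ℂ) ≠ 0 := by simpa using htpos.ne'
      simp only [hC]
      rw [div_eq_iff hrC] at h2
      have h3 : (t:ℂ) * (ψ ((t:ℂ), 0) * ((t ^ ((1:ℝ)/3) : ℝ) : ℂ)) = (t:ℂ) * 1 := by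
        linear_combination -h2
      have h4 := mul_left_cancel₀ htC h3
      rw [Complex.ofReal_inv]
      field_simp
      linear_combination h4
    have hnormval : ∀ᶠ t in 𝓝[>] (0:ℝ), ‖ψ (C t)‖ = (t ^ ((1:ℝ)/3))⁻¹ := by
      filter_upwards [hval, self_mem_nhdsWithin] with t hv ht
      have hr : (0:ℝ) < t ^ ((1:ℝ)/3) := Real.rpow_pos_of_pos ht _
      rw [hv, Complex.norm_real, Real.norm_of_nonneg (inv_nonneg.mpr hr.le)]
    have hatTop : Tendsto (fun t => ‖ψ (C t)‖) (𝓝[>] (0:ℝ)) atTop := by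
      have h13 : Tendsto (fun t : ℝ => t ^ ((1:ℝ)/3)) (𝓝[>] (0:ℝ)) (𝓝[>] (0:ℝ)) := by
        rw [tendsto_nhdsWithin_iff]
        constructor
        · have h1 : ContinuousAt (fun t : ℝ => t ^ ((1:ℝ)/3)) 0 :=
            Real.continuousAt_rpow_const 0 _ (Or.inr (by norm_num))
          have := h1.tendsto.mono_left (nhdsWithin_le_nhds (s := Set.Ioi (0:ℝ)))
          simpa [Real.zero_rpow (by norm_num : ((1:ℝ)/3) ≠ 0)] using this
        · filter_upwards [self_mem_nhdsWithin] with t ht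
          exact Real.rpow_pos_of_pos ht _
      have := tendsto_inv_nhdsGT_zero.comp h13
      exact this.congr' (hnormval.mono fun t h => h.symm)
    exact not_tendsto_atTop_of_tendsto_nhds hψ0.norm hatTop
end

section
/- Let b be a smooth 1-form on an open set U ⊆ ℂⁿ and set v = b + b∧∂̄b + b∧(∂̄b)² + ⋯ + b∧(∂̄b)^{n−1}. If δ is an anti-derivation of degree −1 on forms (interior multiplication by a holomorphic vector field) with δb = 1 on U, and ∇ = δ − ∂̄, then ∇v = 1 on U, i.e., v = b/(∇b) formally satisfies ∇v = 1 wherever δb = 1. -/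
open scoped BigOperators

/-- In the algebra of forms on `U ⊆ ℂⁿ` (abstractly: a ring `A` with even
part `Aev`, odd part `Aodd`, an anti-derivation `δ` of degree `−1` anticommuting with the
anti-derivation `∂̄ = D`, `D² = 0`), if `b` is a (smooth) 1-form with `δ b = 1` and
`v = b + b∧∂̄b + ⋯ + b∧(∂̄b)^{n−1}`, then `∇v = 1` for `∇ = δ − ∂̄`; the top term
`(∂̄b)^n` vanishes for degree reasons on `ℂⁿ`. -/
theorem nabla_of_bochner_martinelli_type_form
    (A : Type*) [Ring A] (Aev : Subsemiring A) (Aodd : AddSubgroup A)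
    (δ D : A →+ A)
    (hδev : ∀ x ∈ Aev, ∀ y : A, δ (x * y) = δ x * y + x * δ y)
    (hδodd : ∀ x ∈ Aodd, ∀ y : A, δ (x * y) = δ x * y - x * δ y)
    (hDev : ∀ x ∈ Aev, ∀ y : A, D (x * y) = D x * y + x * D y)
    (hDodd : ∀ x ∈ Aodd, ∀ y : A, D (x * y) = D x * y - x * D y)
    (hanti : ∀ x : A, δ (D x) = -D (δ x)) (hDD : ∀ x : A, D (D x) = 0)
    (n : ℕ) (hn : 1 ≤ n)
    (b : A) (hb : b ∈ Aodd) (hDb : D b ∈ Aev)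
    (hδb : δ b = 1)
    (htop : (D b) ^ n = 0)
    (v : A) (hv : v = ∑ k ∈ Finset.range n, b * (D b) ^ k) :
    δ v - D v = 1 := by
  set c := D b with hc
  -- b * D 1 = 0
  have h1 := hDodd b hb 1
  rw [mul_one, mul_one] at h1
  have hbe : b * D 1 = 0 := sub_eq_self.mp h1.symm
  -- c * D 1 = 0
  have h2 := hDev c hDb 1
  rw [mul_one, mul_one, hDD] at h2
  have hce : c * D 1 = 0 := by rw [zero_add] at h2; exact h2.symm
  -- b * δ 1 = 0
  have h3 := hδodd b hb 1
  rw [mul_one, mul_one] at h3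
  have hbδ1 : b * δ 1 = 0 := sub_eq_self.mp h3.symm
  -- D c = 0
  have hDc : D c = 0 := hDD b
  -- δ c = - D 1
  have hδc : δ c = - D 1 := by rw [hc, hanti b, hδb]
  -- D (c ^ k) = 0 for k ≥ 1
  have hDck : ∀ k : ℕ, D (c ^ (k + 1)) = 0 := by
    intro k
    induction k with
    | zero => simpa using hDc
    | succ m ih =>
      have := hDev c hDb (c ^ (m + 1))
      rw [hDc, zero_mul, zero_add, ih, mul_zero] at this
      rw [pow_succ']
      exact this
  -- c * δ (c ^ k) = 0 for k ≥ 1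
  have hcδck : ∀ k : ℕ, c * δ (c ^ (k + 1)) = 0 := by
    intro k
    induction k with
    | zero =>
      rw [pow_one, hδc, mul_neg, hce, neg_zero]
    | succ m ih =>
      rw [pow_succ', hδev c hDb (c ^ (m + 1)), mul_add, hδc, neg_mul, mul_neg,
        ← mul_assoc, hce, zero_mul, neg_zero, ← mul_assoc, mul_assoc c c, ih,
        mul_zero, add_zero]
  -- b * δ (c ^ k) = 0 for k ≥ 1
  have hbδck : ∀ k : ℕ, b * δ (c ^ (k + 1)) = 0 := by
    intro k
    cases k with
    | zero => rw [pow_one, hδc, mul_neg, hbe, neg_zero]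
    | succ m =>
      rw [pow_succ', hδev c hDb (c ^ (m + 1)), mul_add, hδc, neg_mul, mul_neg,
        ← mul_assoc, hbe, zero_mul, neg_zero, ← mul_assoc, mul_assoc b c,
        hcδck m, mul_zero, add_zero]
  -- δ (b * c ^ k) = c ^ k
  have hδterm : ∀ k : ℕ, δ (b * c ^ k) = c ^ k := by
    intro k
    rw [hδodd b hb (c ^ k), hδb, one_mul]
    cases k with
    | zero => rw [pow_zero, hbδ1, sub_zero]
    | succ m => rw [hbδck m, sub_zero]
  -- D (b * c ^ k) = c ^ (k + 1)
  have hDterm : ∀ k : ℕ, D (b * c ^ k) = c ^ (k + 1) := by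
    intro k
    rw [hDodd b hb (c ^ k), ← hc, ← pow_succ']
    cases k with
    | zero => rw [pow_zero, hbe, sub_zero]
    | succ m => rw [hDck m, mul_zero, sub_zero]
  -- telescope
  rw [hv, map_sum, map_sum]
  have : (∑ k ∈ Finset.range n, δ (b * c ^ k)) - ∑ k ∈ Finset.range n, D (b * c ^ k)
      = ∑ k ∈ Finset.range n, (c ^ k - c ^ (k + 1)) := by
    rw [← Finset.sum_sub_distrib]
    exact Finset.sum_congr rfl fun k _ => by rw [hδterm k, hDterm k]
  rw [this, Finset.sum_range_sub' (fun k => c ^ k), pow_zero, htop, sub_zero]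
end
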